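/- For any nonzero polynomials q₁(x) ∈ ℂ[x] and q₂(y) ∈ ℂ[y], the right ideal q₁(x)A + q₂(y)A of the Weyl algebra A equals all of A; in particular there exist a, b ∈ A with 1 = q₁(x)a + q₂(y)b. -/

import Mathlib

noncomputable section

/-- Defining relation of the first Weyl algebra: `xy - yx = 1`. -/
inductive WeylRel : FreeAlgebra ℂ (Fin 2) → FreeAlgebra ℂ (Fin 2) → Prop
  | rel : WeylRel (FreeAlgebra.ι ℂ 0 * FreeAlgebra.ι ℂ 1 - FreeAlgebra.ι ℂ 1 * FreeAlgebra.ι ℂ 0) 1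

/-- The first Weyl algebra `A = ℂ⟨x,y⟩/([x,y] - 1)`. -/
abbrev Weyl : Type := RingQuot WeylRel

/-- The generator `x` of the Weyl algebra. -/
def wx : Weyl := RingQuot.mkAlgHom ℂ WeylRel (FreeAlgebra.ι ℂ 0)

/-- The generator `y` of the Weyl algebra. -/
def wy : Weyl := RingQuot.mkAlgHom ℂ WeylRel (FreeAlgebra.ι ℂ 1)

/-- The weight filtration of weight `w = (w₁, w₂)` on the Weyl algebra:
`A_k(w)` is the span of the monomials `x^α y^β` with `w₁ α + w₂ β ≤ k`. -/
def weylF (w₁ w₂ : ℕ) (k : ℤ) : Submodule ℂ Weyl :=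
  Submodule.span ℂ {a : Weyl | ∃ α β : ℕ, (w₁ * α + w₂ * β : ℤ) ≤ k ∧ a = wx ^ α * wy ^ β}

open Polynomial

lemma weyl_comm : wx * wy = wy * wx + 1 := by
  have h := RingQuot.mkAlgHom_rel ℂ WeylRel.rel
  simp only [map_sub, map_mul, map_one] at h
  rw [← wx, ← wy, sub_eq_iff_eq_add] at h
  rw [h, add_comm]

lemma commPow (k : ℕ) : wx * wy ^ k = wy ^ k * wx + (k : ℂ) • wy ^ (k - 1) := by
  induction k with
  | zero => simp
  | succ k ih =>
    rw [pow_succ, ← mul_assoc, ih]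
    cases k with
    | zero => simp [weyl_comm]
    | succ l =>
      rw [add_mul, smul_mul_assoc, Nat.add_sub_cancel, ← pow_succ, mul_assoc, weyl_comm,
        mul_add, mul_one, ← mul_assoc, Nat.add_sub_cancel]
      push_cast
      module

lemma commB1 (p : ℂ[X]) : wx * aeval wy p = aeval wy p * wx + aeval wy (derivative p) := by
  induction p using Polynomial.induction_on' with
  | add f g hf hg => simp only [map_add, mul_add, add_mul, hf, hg]; abel
  | monomial k a =>
    have h0 : wx * ((algebraMap ℂ Weyl) a * wy ^ k)
        = (algebraMap ℂ Weyl) a * (wx * wy ^ k) := by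
      rw [← mul_assoc, ← Algebra.commutes a wx, mul_assoc]
    simp only [aeval_monomial, derivative_monomial, map_mul, map_natCast, h0, commPow]
    rw [mul_add, ← mul_assoc, Algebra.smul_def, map_natCast, ← mul_assoc]

lemma commB1' (p : ℂ[X]) : aeval wy p * wx = wx * aeval wy p - aeval wy (derivative p) := by
  rw [commB1]; abel

open Polynomial in
lemma aeval_wx_comm (p : ℂ[X]) (k : ℕ) : wx ^ k * aeval wx p = aeval wx p * wx ^ k := by
  have h1 : aeval wx ((X : ℂ[X]) ^ k) = wx ^ k := by simp
  rw [← h1, ← map_mul, ← map_mul, mul_comm]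

open Polynomial in
lemma aeval_wy_comm (p : ℂ[X]) (k : ℕ) : wy ^ k * aeval wy p = aeval wy p * wy ^ k := by
  have h1 : aeval wy ((X : ℂ[X]) ^ k) = wy ^ k := by simp
  rw [← h1, ← map_mul, ← map_mul, mul_comm]

def Dbox (a b : ℕ) : Submodule ℂ Weyl :=
  Submodule.span ℂ {z | ∃ i ≤ a, ∃ j ≤ b, z = wx ^ i * wy ^ j}

lemma Dbox_mono {a a' b b' : ℕ} (ha : a ≤ a') (hb : b ≤ b') : Dbox a b ≤ Dbox a' b' :=
  Submodule.span_mono (fun z ⟨i, hi, j, hj, hz⟩ => ⟨i, hi.trans ha, j, hj.trans hb, hz⟩)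

lemma mem_Dbox {i j a b : ℕ} (hi : i ≤ a) (hj : j ≤ b) : wx ^ i * wy ^ j ∈ Dbox a b :=
  Submodule.subset_span ⟨i, hi, j, hj, rfl⟩

lemma Dbox_mul_left {a b : ℕ} {z : Weyl} (hz : z ∈ Dbox a b) : wx * z ∈ Dbox (a + 1) b := by
  induction hz using Submodule.span_induction with
  | mem z hz =>
    obtain ⟨i, hi, j, hj, rfl⟩ := hz
    rw [← mul_assoc, ← pow_succ']
    exact mem_Dbox (by omega) hj
  | zero => simp
  | add u v _ _ hu hv => rw [mul_add]; exact add_mem hu hv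
  | smul c u _ hu => rw [mul_smul_comm]; exact Submodule.smul_mem _ _ hu

lemma Dbox_mul_wy {a b : ℕ} {z : Weyl} (hz : z ∈ Dbox a b) : z * wy ∈ Dbox a (b + 1) := by
  induction hz using Submodule.span_induction with
  | mem z hz =>
    obtain ⟨i, hi, j, hj, rfl⟩ := hz
    rw [mul_assoc, ← pow_succ]
    exact mem_Dbox hi (by omega)
  | zero => simp
  | add u v _ _ hu hv => rw [add_mul]; exact add_mem hu hv
  | smul c u _ hu => rw [smul_mul_assoc]; exact Submodule.smul_mem _ _ hu

lemma Dbox_mul_wy_pow {a b : ℕ} {z : Weyl} (hz : z ∈ Dbox a b) (c : ℕ) :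
    z * wy ^ c ∈ Dbox a (b + c) := by
  induction c with
  | zero => simpa using hz
  | succ c ih =>
    have := Dbox_mul_wy ih
    rwa [mul_assoc, ← pow_succ] at this

open Polynomial in
lemma aeval_wy_mem_Dbox (p : ℂ[X]) : aeval wy p ∈ Dbox 0 p.natDegree := by
  rw [aeval_eq_sum_range]
  refine Submodule.sum_mem _ fun i hi => Submodule.smul_mem _ _ ?_
  have h : (wy : Weyl) ^ i = wx ^ 0 * wy ^ i := by rw [pow_zero, one_mul]
  rw [h]
  exact mem_Dbox le_rfl (Nat.lt_succ_iff.mp (Finset.mem_range.mp hi))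

open Polynomial in
lemma P2 (c : ℕ) : ∀ p : ℂ[X], aeval wy p * wx ^ c ∈ Dbox c p.natDegree := by
  induction c with
  | zero => intro p; simpa using aeval_wy_mem_Dbox p
  | succ c ih =>
    intro p
    have key : aeval wy p * wx ^ (c + 1)
        = wx * (aeval wy p * wx ^ c) - aeval wy (derivative p) * wx ^ c := by
      rw [pow_succ', ← mul_assoc, commB1', sub_mul, mul_assoc]
    rw [key]
    refine sub_mem (Dbox_mul_left (ih p)) ?_
    exact Dbox_mono (Nat.le_succ c)
      ((natDegree_derivative_le p).trans (Nat.sub_le _ _)) (ih (derivative p))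

open Polynomial in
lemma swapC (a : ℕ) (p : ℂ[X]) :
    wx ^ a * aeval wy p - aeval wy p * wx ^ a ∈ Dbox a (p.natDegree - 1) := by
  induction a with
  | zero => simp
  | succ a ih =>
    have h1 : wx * (aeval wy p * wx ^ a)
        = aeval wy p * wx ^ (a + 1) + aeval wy (derivative p) * wx ^ a := by
      rw [← mul_assoc, commB1, add_mul, mul_assoc, ← pow_succ']
    have key : wx ^ (a + 1) * aeval wy p - aeval wy p * wx ^ (a + 1)
        = wx * (wx ^ a * aeval wy p - aeval wy p * wx ^ a)
          + aeval wy (derivative p) * wx ^ a := by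
      rw [mul_sub, h1, ← mul_assoc, ← pow_succ']
      abel
    rw [key]
    refine add_mem (Dbox_mul_left ih) ?_
    exact Dbox_mono (Nat.le_succ a) (natDegree_derivative_le p) (P2 a (derivative p))

open Polynomial in
lemma pow_eq_smul_sub (q : ℂ[X]) (hq : q ≠ 0) (u : Weyl) :
    u ^ q.natDegree = q.leadingCoeff⁻¹ • (aeval u q - aeval u q.eraseLead) := by
  have hsplit : aeval u q.eraseLead + q.leadingCoeff • u ^ q.natDegree = aeval u q := by
    conv_rhs => rw [← eraseLead_add_C_mul_X_pow q]
    rw [map_add, map_mul, aeval_C, map_pow, aeval_X, Algebra.smul_def]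
  rw [← hsplit, add_sub_cancel_left, smul_smul,
    inv_mul_cancel₀ (leadingCoeff_ne_zero.mpr hq), one_smul]

open Polynomial in
lemma claim1 (q : ℂ[X]) (hq : q ≠ 0) (hn : 1 ≤ q.natDegree) (I : Submodule ℂ Weyl)
    (hI : ∀ z : Weyl, aeval wx q * z ∈ I) (b a : ℕ) :
    wx ^ a * wy ^ b ∈ Dbox (q.natDegree - 1) b ⊔ I := by
  induction a using Nat.strong_induction_on with
  | _ a ih =>
    by_cases ha : a ≤ q.natDegree - 1
    · exact Submodule.mem_sup_left (mem_Dbox ha le_rfl)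
    · push_neg at ha
      have han : q.natDegree ≤ a := by omega
      have hpow : wx ^ a = wx ^ (a - q.natDegree) * wx ^ q.natDegree := by
        rw [← pow_add]; congr 1; omega
      have e2 : aeval wx ((X : ℂ[X]) ^ (a - q.natDegree) * q.eraseLead)
          = wx ^ (a - q.natDegree) * aeval wx q.eraseLead := by
        rw [map_mul, map_pow, aeval_X]
      have key : wx ^ a * wy ^ b = q.leadingCoeff⁻¹ •
          (aeval wx q * (wx ^ (a - q.natDegree) * wy ^ b)
            - aeval wx ((X : ℂ[X]) ^ (a - q.natDegree) * q.eraseLead) * wy ^ b) := by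
        rw [hpow, pow_eq_smul_sub q hq, mul_smul_comm, smul_mul_assoc]
        congr 1
        rw [mul_sub, sub_mul, e2, aeval_wx_comm, mul_assoc]
      rw [key]
      refine Submodule.smul_mem _ _ (sub_mem (Submodule.mem_sup_right (hI _)) ?_)
      have hdeg : ((X : ℂ[X]) ^ (a - q.natDegree) * q.eraseLead).natDegree < a := by
        have h1 := natDegree_mul_le (p := (X : ℂ[X]) ^ (a - q.natDegree)) (q := q.eraseLead)
        have h2 := eraseLead_natDegree_le q
        rw [natDegree_X_pow] at h1
        omega
      rw [aeval_eq_sum_range' hdeg, Finset.sum_mul]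
      refine Submodule.sum_mem _ fun i hi => ?_
      rw [smul_mul_assoc]
      exact Submodule.smul_mem _ _ (ih i (Finset.mem_range.mp hi))

open Polynomial in
lemma monomial_mem (q₁ q₂ : ℂ[X]) (h₁ : q₁ ≠ 0) (h₂ : q₂ ≠ 0)
    (hn : 1 ≤ q₁.natDegree) (hm : 1 ≤ q₂.natDegree) (I : Submodule ℂ Weyl)
    (hI1 : ∀ z : Weyl, aeval wx q₁ * z ∈ I) (hI2 : ∀ z : Weyl, aeval wy q₂ * z ∈ I)
    (b : ℕ) : ∀ a : ℕ,
    wx ^ a * wy ^ b ∈ Dbox (q₁.natDegree - 1) (q₂.natDegree - 1) ⊔ I := by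
  induction b using Nat.strong_induction_on with
  | _ b ih =>
    intro a
    have h := claim1 q₁ h₁ hn I hI1 b a
    have hle : Dbox (q₁.natDegree - 1) b ⊔ I
        ≤ Dbox (q₁.natDegree - 1) (q₂.natDegree - 1) ⊔ I := by
      refine sup_le ?_ le_sup_right
      rw [Dbox]
      refine Submodule.span_le.mpr ?_
      rintro z ⟨i, hi, j, hj, rfl⟩
      rcases le_or_gt j (q₂.natDegree - 1) with hjm | hjm
      · exact Submodule.mem_sup_left (mem_Dbox hi hjm)
      rcases lt_or_eq_of_le hj with hjb | rfl
      · exact ih j hjb i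
      -- now j = j, j ≥ m
      have hbm : q₂.natDegree ≤ j := by omega
      have hy : wy ^ j = wy ^ (j - q₂.natDegree) * wy ^ q₂.natDegree := by
        rw [← pow_add]; congr 1; omega
      have e2 : aeval wy ((X : ℂ[X]) ^ (j - q₂.natDegree) * q₂.eraseLead)
          = wy ^ (j - q₂.natDegree) * aeval wy q₂.eraseLead := by
        rw [map_mul, map_pow, aeval_X]
      have key : wx ^ i * wy ^ j = q₂.leadingCoeff⁻¹ •
          (aeval wy q₂ * (wx ^ i * wy ^ (j - q₂.natDegree))
            + (wx ^ i * aeval wy q₂ - aeval wy q₂ * wx ^ i) * wy ^ (j - q₂.natDegree)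
            - wx ^ i * aeval wy ((X : ℂ[X]) ^ (j - q₂.natDegree) * q₂.eraseLead)) := by
        rw [hy, ← mul_assoc, pow_eq_smul_sub q₂ h₂, mul_smul_comm]
        congr 1
        rw [mul_sub, e2, ← mul_assoc]
        congr 1
        rw [mul_assoc, aeval_wy_comm, sub_mul, ← mul_assoc]
        abel
        exact (mul_assoc _ _ _)
      rw [key]
      refine Submodule.smul_mem _ _
        (sub_mem (add_mem (Submodule.mem_sup_right (hI2 _)) ?_) ?_)
      · have hE := Dbox_mul_wy_pow (swapC i q₂) (j - q₂.natDegree)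
        have hle2 : Dbox i (q₂.natDegree - 1 + (j - q₂.natDegree))
            ≤ Dbox (q₁.natDegree - 1) (q₂.natDegree - 1) ⊔ I := by
          rw [Dbox]
          refine Submodule.span_le.mpr ?_
          rintro z ⟨i', hi', j', hj', rfl⟩
          exact ih j' (by omega) i'
        exact hle2 hE
      · have hdeg : ((X : ℂ[X]) ^ (j - q₂.natDegree) * q₂.eraseLead).natDegree < j := by
          have h1 := natDegree_mul_le (p := (X : ℂ[X]) ^ (j - q₂.natDegree))
            (q := q₂.eraseLead)
          have h2 := eraseLead_natDegree_le q₂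
          rw [natDegree_X_pow] at h1
          omega
        rw [aeval_eq_sum_range' hdeg, Finset.mul_sum]
        refine Submodule.sum_mem _ fun j hj => ?_
        rw [mul_smul_comm]
        exact Submodule.smul_mem _ _ (ih j (Finset.mem_range.mp hj) i)
    exact hle h

def Tmon : Submodule ℂ Weyl := Submodule.span ℂ {z | ∃ a b : ℕ, z = wx ^ a * wy ^ b}

lemma Tmon_mul_wx {z : Weyl} (hz : z ∈ Tmon) : z * wx ∈ Tmon := by
  induction hz using Submodule.span_induction with
  | mem z hz =>
    obtain ⟨a, b, rfl⟩ := hz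
    have h : wy ^ b * wx = wx * wy ^ b - (b : ℂ) • wy ^ (b - 1) := by rw [commPow]; abel
    rw [mul_assoc, h, mul_sub, ← mul_assoc, ← pow_succ, mul_smul_comm]
    exact sub_mem (Submodule.subset_span ⟨a + 1, b, rfl⟩)
      (Submodule.smul_mem _ _ (Submodule.subset_span ⟨a, b - 1, rfl⟩))
  | zero => simp
  | add u v _ _ hu hv => rw [add_mul]; exact add_mem hu hv
  | smul c u _ hu => rw [smul_mul_assoc]; exact Submodule.smul_mem _ _ hu

lemma Tmon_mul_wy {z : Weyl} (hz : z ∈ Tmon) : z * wy ∈ Tmon := by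
  induction hz using Submodule.span_induction with
  | mem z hz =>
    obtain ⟨a, b, rfl⟩ := hz
    rw [mul_assoc, ← pow_succ]
    exact Submodule.subset_span ⟨a, b + 1, rfl⟩
  | zero => simp
  | add u v _ _ hu hv => rw [add_mul]; exact add_mem hu hv
  | smul c u _ hu => rw [smul_mul_assoc]; exact Submodule.smul_mem _ _ hu

lemma weyl_adjoin_eq_top : Algebra.adjoin ℂ ({wx, wy} : Set Weyl) = ⊤ := by
  rw [eq_top_iff]
  rintro z -
  obtain ⟨f, rfl⟩ := RingQuot.mkAlgHom_surjective ℂ WeylRel z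
  have hf : f ∈ Algebra.adjoin ℂ (Set.range (FreeAlgebra.ι ℂ)) := by
    rw [FreeAlgebra.adjoin_range_ι]; trivial
  have hmap := AlgHom.map_adjoin (RingQuot.mkAlgHom ℂ WeylRel)
    (Set.range (FreeAlgebra.ι ℂ (X := Fin 2)))
  have hz : RingQuot.mkAlgHom ℂ WeylRel f ∈
      Algebra.adjoin ℂ (RingQuot.mkAlgHom ℂ WeylRel '' Set.range (FreeAlgebra.ι ℂ)) := by
    rw [← hmap]
    exact ⟨f, hf, rfl⟩
  refine Algebra.adjoin_mono ?_ hz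
  rintro _ ⟨_, ⟨i, rfl⟩, rfl⟩
  fin_cases i
  · exact Or.inl rfl
  · exact Or.inr rfl

lemma Tmon_eq_top : Tmon = ⊤ := by
  rw [eq_top_iff]
  rintro z -
  have hz : z ∈ Algebra.adjoin ℂ ({wx, wy} : Set Weyl) := weyl_adjoin_eq_top ▸ trivial
  have key : ∀ t ∈ Tmon, t * z ∈ Tmon := by
    induction hz using Algebra.adjoin_induction with
    | mem u hu =>
      rcases hu with rfl | rfl
      · exact fun t ht => Tmon_mul_wx ht
      · exact fun t ht => Tmon_mul_wy ht
    | algebraMap r =>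
      intro t ht
      rw [Algebra.algebraMap_eq_smul_one, mul_smul_comm, mul_one]
      exact Submodule.smul_mem _ _ ht
    | add u v _ _ hu hv =>
      intro t ht
      rw [mul_add]
      exact add_mem (hu t ht) (hv t ht)
    | mul u v _ _ hu hv =>
      intro t ht
      rw [← mul_assoc]
      exact hv _ (hu t ht)
  have h1 : (1 : Weyl) ∈ Tmon := Submodule.subset_span ⟨0, 0, by simp⟩
  simpa using key 1 h1

def rIdeal (u v : Weyl) : Submodule ℂ Weyl where
  carrier := {z | ∃ a b : Weyl, z = u * a + v * b}
  add_mem' := by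
    rintro x y ⟨a, b, rfl⟩ ⟨c, d, rfl⟩
    exact ⟨a + c, b + d, by rw [mul_add, mul_add]; abel⟩
  zero_mem' := ⟨0, 0, by simp⟩
  smul_mem' := by
    rintro c x ⟨a, b, rfl⟩
    exact ⟨c • a, c • b, by rw [smul_add, mul_smul_comm, mul_smul_comm]⟩

lemma rIdeal_mul {u v z : Weyl} (w : Weyl) (hz : z ∈ rIdeal u v) : z * w ∈ rIdeal u v := by
  obtain ⟨a, b, rfl⟩ := hz
  exact ⟨a * w, b * w, by rw [add_mul, mul_assoc, mul_assoc]⟩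


open Polynomial in
/-- For nonzero `q₁(x) ∈ ℂ[x]` and `q₂(y) ∈ ℂ[y]`, the right ideal `q₁(x)A + q₂(y)A` is all
of the Weyl algebra `A`: there exist `a, b ∈ A` with `1 = q₁(x)a + q₂(y)b`. -/
theorem weyl_right_ideal_eq_top (q₁ q₂ : Polynomial ℂ) (h₁ : q₁ ≠ 0) (h₂ : q₂ ≠ 0) :
    ∃ a b : Weyl, (1 : Weyl) = Polynomial.aeval wx q₁ * a + Polynomial.aeval wy q₂ * b := by
  by_cases hn : q₁.natDegree = 0
  · have hq : q₁ = C (q₁.coeff 0) := eq_C_of_natDegree_eq_zero hn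
    have hc : q₁.coeff 0 ≠ 0 := fun h => h₁ (by rw [hq, h, map_zero])
    refine ⟨algebraMap ℂ Weyl (q₁.coeff 0)⁻¹, 0, ?_⟩
    rw [hq, aeval_C, ← map_mul, coeff_C_zero, mul_inv_cancel₀ hc, map_one, mul_zero, add_zero]
  by_cases hm : q₂.natDegree = 0
  · have hq : q₂ = C (q₂.coeff 0) := eq_C_of_natDegree_eq_zero hm
    have hc : q₂.coeff 0 ≠ 0 := fun h => h₂ (by rw [hq, h, map_zero])
    refine ⟨0, algebraMap ℂ Weyl (q₂.coeff 0)⁻¹, ?_⟩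
    rw [hq, aeval_C, ← map_mul, coeff_C_zero, mul_inv_cancel₀ hc, map_one, mul_zero, zero_add]
  -- main case
  set I : Submodule ℂ Weyl := rIdeal (aeval wx q₁) (aeval wy q₂) with hIdef
  have hI1 : ∀ z : Weyl, aeval wx q₁ * z ∈ I := fun z => ⟨z, 0, by simp⟩
  have hI2 : ∀ z : Weyl, aeval wy q₂ * z ∈ I := fun z => ⟨0, z, by simp⟩
  have hmain := monomial_mem q₁ q₂ h₁ h₂ (by omega) (by omega) I hI1 hI2
  have htop : Dbox (q₁.natDegree - 1) (q₂.natDegree - 1) ⊔ I = ⊤ := by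
    rw [eq_top_iff, ← Tmon_eq_top, Tmon]
    refine Submodule.span_le.mpr ?_
    rintro z ⟨a, b, rfl⟩
    exact hmain b a
  -- the quotient is finite-dimensional
  have hfg : (⊤ : Submodule ℂ (Weyl ⧸ I)).FG := by
    have hmap : Submodule.map I.mkQ (Dbox (q₁.natDegree - 1) (q₂.natDegree - 1)) = ⊤ := by
      rw [Submodule.map_mkQ_eq_top, sup_comm]
      exact htop
    rw [Dbox, Submodule.map_span] at hmap
    refine Submodule.fg_def.mpr ⟨_, ?_, hmap⟩
    refine Set.Finite.image _ (Set.Finite.subset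
      (Set.Finite.image (fun p : ℕ × ℕ => wx ^ p.1 * wy ^ p.2)
        ((Set.finite_Iic (q₁.natDegree - 1)).prod (Set.finite_Iic (q₂.natDegree - 1)))) ?_)
    rintro z ⟨i, hi, j, hj, rfl⟩
    exact ⟨(i, j), ⟨hi, hj⟩, rfl⟩
  haveI hfin : Module.Finite ℂ (Weyl ⧸ I) := Module.finite_def.mpr hfg
  -- right multiplication operators on the quotient
  let Rx : Module.End ℂ (Weyl ⧸ I) :=
    Submodule.mapQ I I (LinearMap.mulRight ℂ wx) (fun z hz => rIdeal_mul wx hz)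
  let Ry : Module.End ℂ (Weyl ⧸ I) :=
    Submodule.mapQ I I (LinearMap.mulRight ℂ wy) (fun z hz => rIdeal_mul wy hz)
  have hcomm : Ry * Rx - Rx * Ry = (1 : Module.End ℂ (Weyl ⧸ I)) := by
    refine Submodule.linearMap_qext _ ?_
    ext z
    simp only [LinearMap.comp_apply, Submodule.mkQ_apply, LinearMap.sub_apply,
      Module.End.mul_apply, Module.End.one_apply, Submodule.mapQ_apply,
      LinearMap.mulRight_apply, Rx, Ry]
    change (Submodule.Quotient.mk (z * wx * wy) : Weyl ⧸ I) - Submodule.Quotient.mk (z * wy * wx)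
      = Submodule.Quotient.mk z
    rw [← Submodule.Quotient.mk_sub]
    congr 1
    rw [mul_assoc, mul_assoc, weyl_comm, mul_add, mul_one, ← mul_assoc]
    abel
  have htr : ((Module.finrank ℂ (Weyl ⧸ I) : ℂ)) = 0 := by
    have h1 : LinearMap.trace ℂ (Weyl ⧸ I) 1 = (Module.finrank ℂ (Weyl ⧸ I) : ℂ) :=
      LinearMap.trace_one ℂ (Weyl ⧸ I)
    rw [← h1, ← hcomm, map_sub, LinearMap.trace_mul_comm, sub_self]
  have hrank : Module.finrank ℂ (Weyl ⧸ I) = 0 := Nat.cast_eq_zero.mp htr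
  haveI hsub : Subsingleton (Weyl ⧸ I) := Module.finrank_zero_iff.mp hrank
  have hone : (1 : Weyl) ∈ I := by
    rw [← Submodule.Quotient.mk_eq_zero]
    exact Subsingleton.elim _ _
  obtain ⟨a, b, hab⟩ := hone
  exact ⟨a, b, hab⟩
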